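/- The inclusion matrix W_{t,k} of t-element subsets versus k-element subsets of a v-element set has full row rank over ℚ whenever t ≤ min(k, v-k); equivalently, its rank over ℚ equals C(v,t). -/

import Mathlib

open Matrix

section helpers
variable {α : Type*} [DecidableEq α]

/-- Counting subsets of `U` of size `s` meeting `W` in exactly `a` points. -/
lemma count_inter_card (U W : Finset α) (hWU : W ⊆ U) (s a : ℕ) (has : a ≤ s) :
    ((U.powersetCard s).filter (fun S => (S ∩ W).card = a)).card
      = W.card.choose a * ((U.card - W.card).choose (s - a)) := by
  rw [show W.card.choose a * ((U.card - W.card).choose (s - a))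
      = ((W.powersetCard a) ×ˢ ((U \ W).powersetCard (s - a))).card by
    rw [Finset.card_product, Finset.card_powersetCard, Finset.card_powersetCard,
      Finset.card_sdiff_of_subset hWU]]
  apply Finset.card_nbij' (i := fun S => (S ∩ W, S \ W)) (j := fun p => p.1 ∪ p.2)
  · intro S hS
    simp only [Finset.mem_coe, Finset.mem_filter, Finset.mem_powersetCard] at hS
    obtain ⟨⟨hSU, hScard⟩, hSa⟩ := hS
    simp only [Finset.mem_coe, Finset.mem_product, Finset.mem_powersetCard]
    refine ⟨⟨Finset.inter_subset_right, hSa⟩, Finset.sdiff_subset_sdiff hSU le_rfl, ?_⟩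
    have := Finset.card_sdiff_add_card_inter S W
    omega
  · intro p hp
    simp only [Finset.mem_coe, Finset.mem_product, Finset.mem_powersetCard] at hp
    obtain ⟨⟨h1, h1c⟩, h2, h2c⟩ := hp
    have hdisj : Disjoint p.1 p.2 :=
      Finset.disjoint_of_subset_left h1 (Finset.disjoint_of_subset_right h2 Finset.disjoint_sdiff)
    have hinter : (p.1 ∪ p.2) ∩ W = p.1 := by
      rw [Finset.union_inter_distrib_right, Finset.inter_eq_left.2 h1,
        Finset.disjoint_iff_inter_eq_empty.1
          (Finset.disjoint_of_subset_left h2 Finset.sdiff_disjoint), Finset.union_empty]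
    simp only [Finset.mem_coe, Finset.mem_filter, Finset.mem_powersetCard]
    refine ⟨⟨Finset.union_subset (h1.trans hWU) (h2.trans (Finset.sdiff_subset)), ?_⟩, ?_⟩
    · rw [Finset.card_union_of_disjoint hdisj, h1c, h2c]; omega
    · rw [hinter, h1c]
  · intro S hS
    ext x
    simp only [Finset.mem_union, Finset.mem_inter, Finset.mem_sdiff]
    tauto
  · intro p hp
    simp only [Finset.mem_coe, Finset.mem_product, Finset.mem_powersetCard] at hp
    obtain ⟨⟨h1, h1c⟩, h2, h2c⟩ := hp
    have hinter : (p.1 ∪ p.2) ∩ W = p.1 := by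
      rw [Finset.union_inter_distrib_right, Finset.inter_eq_left.2 h1,
        Finset.disjoint_iff_inter_eq_empty.1
          (Finset.disjoint_of_subset_left h2 Finset.sdiff_disjoint), Finset.union_empty]
    have hsd : (p.1 ∪ p.2) \ W = p.2 := by
      rw [Finset.union_sdiff_distrib, Finset.sdiff_eq_empty_iff_subset.2 h1,
        Finset.empty_union, Finset.sdiff_eq_self_iff_disjoint.2
          (Finset.disjoint_of_subset_left h2 Finset.sdiff_disjoint)]
    show ((p.1 ∪ p.2) ∩ W, (p.1 ∪ p.2) \ W) = p
    rw [hinter, hsd]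

/-- Reindex a sum over `k`-subsets containing `T` by removing `T`. -/
lemma sum_superset_reindex (V T : Finset α) (hTV : T ⊆ V) (k : ℕ) (htk : T.card ≤ k)
    (f : Finset α → ℚ) :
    ∑ K ∈ (V.powersetCard k).filter (fun K => T ⊆ K), f K
      = ∑ S ∈ (V \ T).powersetCard (k - T.card), f (S ∪ T) := by
  apply Finset.sum_nbij' (i := fun K => K \ T) (j := fun S => S ∪ T)
  · intro K hK
    simp only [Finset.mem_filter, Finset.mem_powersetCard] at hK ⊢
    obtain ⟨⟨hKV, hKc⟩, hTK⟩ := hK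
    refine ⟨Finset.sdiff_subset_sdiff hKV le_rfl, ?_⟩
    rw [Finset.card_sdiff_of_subset hTK, hKc]
  · intro S hS
    simp only [Finset.mem_powersetCard] at hS
    obtain ⟨hSV, hSc⟩ := hS
    have hdisj : Disjoint S T := Finset.disjoint_of_subset_left hSV Finset.sdiff_disjoint
    simp only [Finset.mem_filter, Finset.mem_powersetCard]
    refine ⟨⟨Finset.union_subset (hSV.trans Finset.sdiff_subset) hTV, ?_⟩,
      Finset.subset_union_right⟩
    rw [Finset.card_union_of_disjoint hdisj, hSc]; omega
  · intro K hK
    simp only [Finset.mem_filter] at hK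
    exact Finset.sdiff_union_of_subset hK.2
  · intro S hS
    simp only [Finset.mem_powersetCard] at hS
    have hdisj : Disjoint S T := Finset.disjoint_of_subset_left hS.1 Finset.sdiff_disjoint
    rw [Finset.union_sdiff_right, Finset.sdiff_eq_self_iff_disjoint.2 hdisj]
  · intro K hK
    simp only [Finset.mem_filter] at hK
    rw [Finset.sdiff_union_of_subset hK.2]

end helpers

/-- Coefficients solving an upper-triangular system by downward recursion. -/
noncomputable def invCoef (N : ℕ → ℕ → ℚ) (t : ℕ) : ℕ → ℚ
  | j =>
    if h : j ≤ t then
      ((if j = t then 1 else 0) -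
        ∑ i ∈ (Finset.Icc (j+1) t).attach, N j i.1 * invCoef N t i.1) / N j j
    else 0
termination_by j => t - j
decreasing_by
  have := Finset.mem_Icc.1 i.2
  omega

lemma invCoef_of_gt (N : ℕ → ℕ → ℚ) (t j : ℕ) (h : t < j) : invCoef N t j = 0 := by
  rw [invCoef]
  exact dif_neg (by omega)

lemma invCoef_spec (N : ℕ → ℕ → ℚ) (t : ℕ) (hN : ∀ j ≤ t, N j j ≠ 0) (j : ℕ) (hj : j ≤ t) :
    ∑ i ∈ Finset.Icc j t, N j i * invCoef N t i = if j = t then 1 else 0 := by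
  have hins : Finset.Icc j t = insert j (Finset.Icc (j + 1) t) := by
    ext x
    simp only [Finset.mem_Icc, Finset.mem_insert]
    omega
  rw [hins, Finset.sum_insert (by simp [Finset.mem_Icc])]
  have hunf : invCoef N t j = ((if j = t then 1 else 0) -
      ∑ i ∈ Finset.Icc (j + 1) t, N j i * invCoef N t i) / N j j := by
    rw [invCoef, dif_pos hj, Finset.sum_attach _ (fun i => N j i * invCoef N t i)]
  rw [hunf, mul_comm, div_mul_cancel₀ _ (hN j hj)]
  ring

/-- Gottlieb–Kantor: the inclusion matrix `W_{t,k}` has full row rank `C(v,t)` over `ℚ`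
whenever `t ≤ min (k, v - k)`. -/
theorem inclusion_matrix_full_row_rank {α : Type*} [DecidableEq α] (V : Finset α)
    (t k : ℕ) (htk : t ≤ k) (htv : t + k ≤ V.card) :
    (Matrix.of (fun (T : ↥(V.powersetCard t)) (K : ↥(V.powersetCard k)) =>
      if (T : Finset α) ⊆ (K : Finset α) then (1 : ℚ) else 0)).rank
      = (V.card).choose t := by
  classical
  set v := V.card with hv
  set W₀ : Matrix ↥(V.powersetCard t) ↥(V.powersetCard k) ℚ :=
    Matrix.of (fun (T : ↥(V.powersetCard t)) (K : ↥(V.powersetCard k)) =>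
      if (T : Finset α) ⊆ (K : Finset α) then (1 : ℚ) else 0) with hW₀
  set N : ℕ → ℕ → ℚ := fun j i =>
    if i - j ≤ k - t then
      (((t - j).choose (i - j) * ((v - t) - (t - j)).choose (k - t - (i - j)) : ℕ) : ℚ)
    else 0 with hNdef
  have hNdiag : ∀ j ≤ t, N j j ≠ 0 := by
    intro j hj
    have h0 : j - j = 0 := by omega
    have hle : k - t ≤ (v - t) - (t - j) := by omega
    simp only [hNdef, h0, Nat.zero_le, if_pos, Nat.choose_zero_right, Nat.sub_zero, one_mul]
    exact_mod_cast (Nat.choose_pos hle).ne'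
  set c : ℕ → ℚ := invCoef N t with hc
  set M : Matrix ↥(V.powersetCard k) ↥(V.powersetCard t) ℚ :=
    Matrix.of (fun K T' => c (((K : Finset α) ∩ (T' : Finset α)).card)) with hM
  have key : W₀ * M = 1 := by
    ext T T'
    obtain ⟨hTV, hTcard⟩ := Finset.mem_powersetCard.1 T.2
    obtain ⟨hT'V, hT'card⟩ := Finset.mem_powersetCard.1 T'.2
    set j := (((T : Finset α)) ∩ ((T' : Finset α))).card with hj
    have hjle : j ≤ t :=
      le_trans (Finset.card_le_card Finset.inter_subset_left) (le_of_eq hTcard)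
    set Wst : Finset α := ((T' : Finset α)) \ ((T : Finset α)) with hWst
    have hWstsub : Wst ⊆ V \ (T : Finset α) := Finset.sdiff_subset_sdiff hT'V le_rfl
    have hWstcard : Wst.card = t - j := by
      show ((T' : Finset α) \ (T : Finset α)).card = t - ((T : Finset α) ∩ (T' : Finset α)).card
      have h1 := Finset.card_sdiff_add_card_inter (T' : Finset α) (T : Finset α)
      rw [Finset.inter_comm] at h1
      omega
    have hVT : (V \ (T : Finset α)).card = v - t := by
      rw [Finset.card_sdiff_of_subset hTV, hTcard]
    -- the matrix entry as a sum
    rw [Matrix.mul_apply, Matrix.one_apply]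
    have step1 : ∑ K : ↥(V.powersetCard k), W₀ T K * M K T'
        = ∑ K ∈ (V.powersetCard k).filter (fun K => (T : Finset α) ⊆ K),
            c ((K ∩ (T' : Finset α)).card) := by
      rw [Finset.sum_filter, ← Finset.sum_coe_sort (V.powersetCard k)]
      refine Finset.sum_congr rfl fun K _ => ?_
      simp only [hW₀, hM, Matrix.of_apply]
      by_cases h : (T : Finset α) ⊆ (K : Finset α) <;> simp [h]
    rw [step1, sum_superset_reindex V (T : Finset α) hTV k (by rw [hTcard]; exact htk)
      (fun K => c ((K ∩ (T' : Finset α)).card)), hTcard]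
    have step3 : ∀ S ∈ (V \ (T : Finset α)).powersetCard (k - t),
        c (((S ∪ (T : Finset α)) ∩ (T' : Finset α)).card) = c (j + (S ∩ Wst).card) := by
      intro S hS
      obtain ⟨hSV, hScard⟩ := Finset.mem_powersetCard.1 hS
      have hST : Disjoint S (T : Finset α) :=
        Finset.disjoint_of_subset_left hSV Finset.sdiff_disjoint
      have h1 : (S ∪ (T : Finset α)) ∩ (T' : Finset α)
          = (S ∩ Wst) ∪ (((T : Finset α)) ∩ ((T' : Finset α))) := by
        ext x
        simp only [Finset.mem_union, Finset.mem_inter, Finset.mem_sdiff, hWst]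
        have hx : x ∈ S → x ∉ (T : Finset α) := fun h1 h2 =>
          Finset.disjoint_left.1 hST h1 h2
        tauto
      have h2 : Disjoint (S ∩ Wst) (((T : Finset α)) ∩ ((T' : Finset α))) :=
        Finset.disjoint_of_subset_left Finset.inter_subset_left
          (Finset.disjoint_of_subset_right Finset.inter_subset_left hST)
      rw [h1, Finset.card_union_of_disjoint h2, ← hj, add_comm]
    rw [Finset.sum_congr rfl step3]
    have hmap : ∀ S ∈ (V \ (T : Finset α)).powersetCard (k - t),
        (S ∩ Wst).card ∈ Finset.range (k - t + 1) := by
      intro S hS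
      obtain ⟨hSV, hScard⟩ := Finset.mem_powersetCard.1 hS
      rw [Finset.mem_range]
      have : (S ∩ Wst).card ≤ S.card := Finset.card_le_card Finset.inter_subset_left
      omega
    rw [← Finset.sum_fiberwise_of_maps_to' hmap (fun a => c (j + a))]
    have step5 : ∀ a ∈ Finset.range (k - t + 1),
        ∑ S ∈ ((V \ (T : Finset α)).powersetCard (k - t)).filter
          (fun S => (S ∩ Wst).card = a), c (j + a)
        = N j (j + a) * c (j + a) := by
      intro a ha
      rw [Finset.sum_const, nsmul_eq_mul]
      congr 1
      rw [count_inter_card (V \ (T : Finset α)) Wst hWstsub (k - t) a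
        (by rw [Finset.mem_range] at ha; omega), hWstcard, hVT]
      have hg : (j + a) - j = a := by omega
      rw [hNdef]
      simp only [hg]
      rw [if_pos (by rw [Finset.mem_range] at ha; omega)]
    rw [Finset.sum_congr rfl step5]
    -- reindex a ↦ j + a
    have step7 : ∑ a ∈ Finset.range (k - t + 1), N j (j + a) * c (j + a)
        = ∑ i ∈ Finset.Icc j (j + (k - t)), N j i * c i := by
      apply Finset.sum_nbij' (i := fun a => j + a) (j := fun i => i - j)
      · intro a ha
        rw [Finset.mem_range] at ha
        rw [Finset.mem_Icc]
        omega
      · intro i hi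
        rw [Finset.mem_Icc] at hi
        rw [Finset.mem_range]
        omega
      · intro a _; omega
      · intro i hi
        rw [Finset.mem_Icc] at hi
        omega
      · intro a _
        rfl
    rw [step7]
    have step8 : ∑ i ∈ Finset.Icc j (j + (k - t)), N j i * c i
        = ∑ i ∈ Finset.Icc j (t + k), N j i * c i := by
      apply Finset.sum_subset
      · intro x hx
        rw [Finset.mem_Icc] at hx ⊢
        omega
      · intro x hx hx'
        rw [Finset.mem_Icc] at hx hx'
        have : ¬ (x - j ≤ k - t) := by omega
        rw [hNdef]
        simp only [if_neg this, zero_mul]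
    have step9 : ∑ i ∈ Finset.Icc j t, N j i * c i
        = ∑ i ∈ Finset.Icc j (t + k), N j i * c i := by
      apply Finset.sum_subset
      · intro x hx
        rw [Finset.mem_Icc] at hx ⊢
        omega
      · intro x hx hx'
        rw [Finset.mem_Icc] at hx hx'
        rw [hc, invCoef_of_gt N t x (by omega), mul_zero]
    rw [step8, ← step9, hc, invCoef_spec N t hNdiag j hjle]
    -- j = t ↔ T = T'
    by_cases hTT : T = T'
    · rw [if_pos hTT, if_pos]
      show ((T : Finset α) ∩ (T' : Finset α)).card = t
      rw [hTT, Finset.inter_self, hT'card]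
    · rw [if_neg hTT, if_neg]
      intro hjt
      apply hTT
      have hsub : (T : Finset α) ⊆ (T' : Finset α) := by
        have h1 : ((T : Finset α)) ∩ ((T' : Finset α)) = (T : Finset α) :=
          Finset.eq_of_subset_of_card_le Finset.inter_subset_left (by rw [hTcard]; exact hjt.ge)
        exact h1 ▸ Finset.inter_subset_right
      have : (T : Finset α) = (T' : Finset α) :=
        Finset.eq_of_subset_of_card_le hsub (by rw [hTcard, hT'card])
      exact Subtype.ext this
  -- conclude on ranks
  have hcard : Fintype.card ↥(V.powersetCard t) = v.choose t := by
    rw [Fintype.card_coe, Finset.card_powersetCard]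
  apply le_antisymm
  · calc W₀.rank ≤ Fintype.card ↥(V.powersetCard t) := Matrix.rank_le_card_height _
      _ = v.choose t := hcard
  · calc v.choose t = Fintype.card ↥(V.powersetCard t) := hcard.symm
      _ = (1 : Matrix ↥(V.powersetCard t) ↥(V.powersetCard t) ℚ).rank := Matrix.rank_one.symm
      _ = (W₀ * M).rank := by rw [key]
      _ ≤ W₀.rank := Matrix.rank_mul_le_left _ _
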